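/- For any commutative quantale V, the family λ_X : L(V^X) → V^{LX} (as defined by λ_X(σ¹,…,σⁿ)(x₁,…,xₙ) = σ¹(x₁) ⊗ ⋯ ⊗ σⁿ(xₙ), and ⊥ on lists of wrong length) is a strict distributive law of the list monad L over the V-powerset monad P_V: it satisfies strictly the unit and multiplication laws with respect to both monads, i.e., λ_X ∘ L(y_X) = y_{LX}, λ_X ∘ L(s_X) = s_{LX} ∘ (λ_X)_! ∘ λ_{P_V X}, λ_X ∘ e_{P_V X} = (e_X)_!, and λ_X ∘ m_{P_V X} = (m_X)_! ∘ λ_{LX} ∘ L(λ_X). -/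

import Mathlib

/-- The distributive law `λ_X : L(V^X) → V^{LX}`. -/
noncomputable def lamLaw {V : Type*} [CompleteLattice V] [Monoid V] {X : Type*}
    (σs : List (X → V)) : List X → V := fun xs =>
  if xs.length = σs.length then (List.zipWith (fun σ x => σ x) σs xs).prod else ⊥

/-- `(f_! σ) y = ⨆_{f x = y} σ x`. -/
noncomputable def fbang {V : Type*} [CompleteLattice V] {X Y : Type*}
    (f : X → Y) (σ : X → V) : Y → V :=
  fun y => ⨆ x : {x // f x = y}, σ x.1

/-- The unit `y_X` of the `V`-powerset monad. -/
noncomputable def yV (V : Type*) [CompleteLattice V] [Monoid V] {X : Type*}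
    [DecidableEq X] (x : X) : X → V :=
  fun x' => if x' = x then 1 else ⊥

/-- The multiplication `s_X` of the `V`-powerset monad. -/
noncomputable def sV {V : Type*} [CompleteLattice V] [Monoid V] {X : Type*}
    (Θ : (X → V) → V) : X → V :=
  fun x => ⨆ σ : X → V, Θ σ * σ x

section Aux

variable {V : Type*} [CompleteLattice V] [CommMonoid V]

lemma mul_bot' (hl : ∀ (u : V) (S : Set V), u * sSup S = ⨆ v ∈ S, u * v) (u : V) :
    u * (⊥ : V) = ⊥ := by simpa using hl u ∅

lemma bot_mul' (hr : ∀ (u : V) (S : Set V), sSup S * u = ⨆ v ∈ S, v * u) (u : V) :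
    (⊥ : V) * u = ⊥ := by simpa using hr u ∅

lemma mul_iSup' (hl : ∀ (u : V) (S : Set V), u * sSup S = ⨆ v ∈ S, u * v)
    {ι : Sort*} (u : V) (f : ι → V) : u * ⨆ i, f i = ⨆ i, u * f i := by
  rw [iSup, hl u (Set.range f), iSup_range]

lemma iSup_mul' (hr : ∀ (u : V) (S : Set V), sSup S * u = ⨆ v ∈ S, v * u)
    {ι : Sort*} (u : V) (f : ι → V) : (⨆ i, f i) * u = ⨆ i, f i * u := by
  rw [iSup, hr u (Set.range f), iSup_range]

variable {X : Type*}

lemma join_eq {α : Type*} (l : List (List α)) : l.flatten = l.flatten := rfl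

lemma lamLaw_nil_nil : lamLaw ([] : List (X → V)) ([] : List X) = 1 := by
  simp [lamLaw]

lemma lamLaw_nil_cons (x : X) (t : List X) :
    lamLaw ([] : List (X → V)) (x :: t) = ⊥ := by
  simp [lamLaw]

lemma lamLaw_of_ne {σs : List (X → V)} {xs : List X} (h : xs.length ≠ σs.length) :
    lamLaw σs xs = ⊥ := by
  simp [lamLaw, h]

lemma lamLaw_cons_nil (σ : X → V) (σs : List (X → V)) :
    lamLaw (σ :: σs) ([] : List X) = ⊥ := by
  simp [lamLaw]

lemma lamLaw_cons (hl : ∀ (u : V) (S : Set V), u * sSup S = ⨆ v ∈ S, u * v)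
    (σ : X → V) (σs : List (X → V)) (x : X) (xs : List X) :
    lamLaw (σ :: σs) (x :: xs) = σ x * lamLaw σs xs := by
  by_cases h : xs.length = σs.length
  · simp [lamLaw, h]
  · simp [lamLaw, h, mul_bot' hl]

lemma lamLaw_append (hl : ∀ (u : V) (S : Set V), u * sSup S = ⨆ v ∈ S, u * v)
    (hr : ∀ (u : V) (S : Set V), sSup S * u = ⨆ v ∈ S, v * u)
    (a b : List (X → V)) (xs : List X) :
    lamLaw (a ++ b) xs = lamLaw a (xs.take a.length) * lamLaw b (xs.drop a.length) := by
  by_cases h : xs.length = a.length + b.length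
  · have hle : a.length ≤ xs.length := by omega
    have ht : (xs.take a.length).length = a.length := by simp [hle]
    have hd : (xs.drop a.length).length = b.length := by simp; omega
    simp only [lamLaw]
    rw [if_pos (by simp [h]), if_pos ht, if_pos hd]
    conv_lhs => rw [← List.take_append_drop a.length xs]
    rw [List.zipWith_append ht.symm, List.prod_append]
  · rcases lt_or_ge xs.length a.length with hlt | hge
    · have h1 : (xs.take a.length).length ≠ a.length := by simp; omega
      rw [lamLaw_of_ne (by simp; omega), lamLaw_of_ne h1, bot_mul' hr]
    · have h2 : (xs.drop a.length).length ≠ b.length := by simp; omega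
      rw [lamLaw_of_ne (by simp; omega), lamLaw_of_ne h2, mul_bot' hl]

lemma sV_fbang (hr : ∀ (u : V) (S : Set V), sSup S * u = ⨆ v ∈ S, v * u)
    {A : Type*} (f : A → (X → V)) (Θ : A → V) (x : X) :
    sV (fbang f Θ) x = ⨆ a, Θ a * f a x := by
  unfold sV fbang
  simp only [iSup_mul' hr]
  apply le_antisymm
  · refine iSup_le fun σ => iSup_le fun a => ?_
    obtain ⟨a, rfl⟩ := a
    exact le_iSup (fun a => Θ a * f a x) a
  · exact iSup_le fun a => le_iSup_of_le (f a) (le_iSup_of_le ⟨a, rfl⟩ le_rfl)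

lemma lamLaw_sV (hl : ∀ (u : V) (S : Set V), u * sSup S = ⨆ v ∈ S, u * v)
    (hr : ∀ (u : V) (S : Set V), sSup S * u = ⨆ v ∈ S, v * u)
    (Θs : List ((X → V) → V)) (xs : List X) :
    lamLaw (Θs.map sV) xs = ⨆ l : List (X → V), lamLaw Θs l * lamLaw l xs := by
  induction Θs generalizing xs with
  | nil =>
    simp only [List.map_nil]
    apply le_antisymm
    · refine le_iSup_of_le [] ?_
      rw [lamLaw_nil_nil, one_mul]
    · refine iSup_le fun l => ?_
      cases l with
      | nil => rw [lamLaw_nil_nil, one_mul]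
      | cons σ t => rw [lamLaw_nil_cons, bot_mul' hr]; exact bot_le
  | cons Θ Θt ih =>
    cases xs with
    | nil =>
      rw [List.map_cons, lamLaw_cons_nil]
      symm
      rw [iSup_eq_bot]
      intro l
      cases l with
      | nil => rw [lamLaw_cons_nil, bot_mul' hr]
      | cons σ t => rw [lamLaw_cons_nil, mul_bot' hl]
    | cons x xt =>
      rw [List.map_cons, lamLaw_cons hl, ih]
      have hs : sV Θ x = ⨆ σ : X → V, Θ σ * σ x := rfl
      rw [hs, mul_iSup' hl]
      simp only [iSup_mul' hr]
      apply le_antisymm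
      · refine iSup_le fun l => iSup_le fun σ => ?_
        refine le_iSup_of_le (σ :: l) ?_
        rw [lamLaw_cons hl, lamLaw_cons hl, mul_mul_mul_comm]
      · refine iSup_le fun l => ?_
        cases l with
        | nil => rw [lamLaw_cons_nil, bot_mul' hr]; exact bot_le
        | cons σ t =>
          rw [lamLaw_cons hl, lamLaw_cons hl, mul_mul_mul_comm]
          exact le_iSup_of_le t (le_iSup_of_le σ le_rfl)

lemma lamLaw_join (hl : ∀ (u : V) (S : Set V), u * sSup S = ⨆ v ∈ S, u * v)
    (hr : ∀ (u : V) (S : Set V), sSup S * u = ⨆ v ∈ S, v * u)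
    (σss : List (List (X → V))) (xs : List X) :
    lamLaw σss.flatten xs =
      ⨆ l : {l : List (List X) // l.flatten = xs},
        lamLaw (σss.map (fun s => lamLaw s)) l.1 := by
  induction σss generalizing xs with
  | nil =>
    simp only [join_eq, List.flatten_nil, List.map_nil]
    apply le_antisymm
    · cases xs with
      | nil =>
        refine le_iSup_of_le ⟨[], rfl⟩ ?_
        rw [lamLaw_nil_nil, lamLaw_nil_nil]
      | cons x t => rw [lamLaw_nil_cons]; exact bot_le
    · refine iSup_le fun l => ?_
      obtain ⟨l, hj⟩ := l
      cases l with
      | nil =>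
        simp only [join_eq, List.flatten_nil] at hj
        subst hj
        rw [lamLaw_nil_nil, lamLaw_nil_nil]
      | cons ys t => rw [lamLaw_nil_cons]; exact bot_le
  | cons σs σst ih =>
    rw [List.flatten_cons, lamLaw_append hl hr, ih, mul_iSup' hl]
    apply le_antisymm
    · refine iSup_le fun lt => ?_
      obtain ⟨lt, hlt⟩ := lt
      by_cases hc : σs.length ≤ xs.length
      · refine le_iSup_of_le ⟨xs.take σs.length :: lt, ?_⟩ ?_
        · simp [hlt]
        · rw [List.map_cons, lamLaw_cons hl]
      · rw [lamLaw_of_ne (show (xs.take σs.length).length ≠ σs.length by simp; omega),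
          bot_mul' hr]
        exact bot_le
    · refine iSup_le fun l => ?_
      obtain ⟨l, hj⟩ := l
      cases l with
      | nil => rw [List.map_cons, lamLaw_cons_nil]; exact bot_le
      | cons ys lt =>
        rw [List.map_cons, lamLaw_cons hl]
        simp only [join_eq, List.flatten_cons] at hj
        by_cases hlen : ys.length = σs.length
        · have h1 : xs.take σs.length = ys := by
            rw [← hj, ← hlen, List.take_left]
          have h2 : xs.drop σs.length = lt.flatten := by
            rw [← hj, ← hlen, List.drop_left]
          rw [h1]
          exact le_iSup_of_le ⟨lt, h2.symm⟩ le_rfl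
        · rw [lamLaw_of_ne hlen, bot_mul' hr]
          exact bot_le

end Aux

/-- For a commutative quantale `V`, `λ` is a strict distributive law of the list monad
`L` (unit `x ↦ [x]`, multiplication `join`) over the `V`-powerset monad `P_V`:
`λ_X ∘ L(y_X) = y_{LX}`, `λ_X ∘ L(s_X) = s_{LX} ∘ (λ_X)_! ∘ λ_{P_V X}`,
`λ_X ∘ e_{P_V X} = (e_X)_!`, and `λ_X ∘ m_{P_V X} = (m_X)_! ∘ λ_{LX} ∘ L(λ_X)`. -/
theorem lam_strict_distributive_law (V : Type*) [CompleteLattice V] [CommMonoid V]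
    (hl : ∀ (u : V) (S : Set V), u * sSup S = ⨆ v ∈ S, u * v)
    (hr : ∀ (u : V) (S : Set V), sSup S * u = ⨆ v ∈ S, v * u) :
    -- strict P_V-unit law
    (∀ (X : Type*) [DecidableEq X] (xs : List X),
        lamLaw (xs.map (yV V)) = yV V xs) ∧
    -- strict P_V-multiplication law
    (∀ (X : Type*) (Θs : List ((X → V) → V)),
        lamLaw (Θs.map sV) =
          sV (fbang (fun l : List (X → V) => lamLaw l) (lamLaw Θs))) ∧
    -- strict L-unit law
    (∀ (X : Type*) (σ : X → V), lamLaw [σ] = fbang (fun x : X => [x]) σ) ∧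
    -- strict L-multiplication law
    (∀ (X : Type*) (σss : List (List (X → V))),
        lamLaw σss.flatten =
          fbang (fun l : List (List X) => l.flatten)
            (lamLaw (σss.map (fun l => lamLaw l)))) := by
  refine ⟨?_, ?_, ?_, ?_⟩
  · -- P_V-unit law
    intro X _ xs
    funext ys
    induction xs generalizing ys with
    | nil =>
      cases ys with
      | nil => rw [List.map_nil, lamLaw_nil_nil]; simp [yV]
      | cons y t =>
        rw [List.map_nil, lamLaw_nil_cons]
        simp [yV]
    | cons x xt ih =>
      cases ys with
      | nil =>
        rw [List.map_cons, lamLaw_cons_nil]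
        simp [yV]
      | cons y yt =>
        rw [List.map_cons, lamLaw_cons hl, ih]
        by_cases h : y = x
        · subst h
          simp [yV]
        · simp [yV, h, bot_mul' hr]
  · -- P_V-multiplication law
    intro X Θs
    funext xs
    rw [lamLaw_sV hl hr, sV_fbang hr]
  · -- L-unit law
    intro X σ
    funext xs
    unfold fbang
    cases xs with
    | nil =>
      haveI : IsEmpty {x : X // [x] = ([] : List X)} := ⟨fun x => by simpa using x.2⟩
      rw [iSup_of_empty, lamLaw_cons_nil]
    | cons a t =>
      cases t with
      | nil =>
        rw [lamLaw_cons hl, lamLaw_nil_nil, mul_one]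
        apply le_antisymm
        · refine le_iSup_of_le ⟨a, rfl⟩ le_rfl
        · refine iSup_le fun x => ?_
          obtain ⟨x, hx⟩ := x
          simp only [List.cons.injEq, and_true] at hx
          subst hx
          exact le_rfl
      | cons b t =>
        haveI : IsEmpty {x : X // [x] = a :: b :: t} := ⟨fun x => by simpa using x.2⟩
        rw [iSup_of_empty, lamLaw_of_ne (by simp)]
  · -- L-multiplication law
    intro X σss
    funext xs
    rw [lamLaw_join hl hr]
    rfl
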